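/- Let ψ : [0, ∞) → [0, ∞) be continuous and nondecreasing, G(x) = x + √x, p : [0,∞) → [0,∞) nondecreasing, and suppose ψ(t) ≤ C·G(∫₀ᵗ ψ(s) ds) + C·p(t) for all t ≥ 0, where C > 0. Then with C' = max{2C, 4C²} one has G^{-1}(ψ(t)) ≤ C' ∫₀ᵗ ψ(s) ds + C' G^{-1}(p(t)) for all t ≥ 0. -/
import Mathlib
set_option maxHeartbeats 1000000


/-- If `ψ` is continuous, nondecreasing, nonnegative, `p` nondecreasing
nonnegative, `C > 0` and `ψ(t) ≤ C·G(∫₀ᵗ ψ) + C·p(t)` with `G(x) = x + √x`, then with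
`C' = max{2C, 4C²}` one has `G⁻¹(ψ(t)) ≤ C' ∫₀ᵗ ψ + C' G⁻¹(p(t))` for all `t ≥ 0`,
where `G⁻¹(x) = x + 1/2 − √(x + 1/4)`. -/
theorem Ginv_integral_inequality (C : ℝ) (hC : 0 < C) (ψ p : ℝ → ℝ)
    (hψc : Continuous ψ) (hψm : Monotone ψ) (hψ0 : ∀ t, 0 ≤ ψ t)
    (hpm : Monotone p) (hp0 : ∀ t, 0 ≤ p t)
    (h : ∀ t ≥ (0 : ℝ), ψ t ≤
      C * ((∫ s in (0 : ℝ)..t, ψ s) + Real.sqrt (∫ s in (0 : ℝ)..t, ψ s)) + C * p t) :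
    ∀ t ≥ (0 : ℝ),
      ψ t + 1 / 2 - Real.sqrt (ψ t + 1 / 4) ≤
        max (2 * C) (4 * C ^ 2) * (∫ s in (0 : ℝ)..t, ψ s) +
          max (2 * C) (4 * C ^ 2) * (p t + 1 / 2 - Real.sqrt (p t + 1 / 4)) := by
  intro t ht
  set C' : ℝ := max (2 * C) (4 * C ^ 2) with hC'def
  have hC'1 : 2 * C ≤ C' := le_max_left _ _
  have hC'2 : 4 * C ^ 2 ≤ C' := le_max_right _ _
  have hC'pos : 0 < C' := lt_of_lt_of_le (by linarith) hC'1
  set I : ℝ := ∫ s in (0 : ℝ)..t, ψ s with hIdef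
  have hI : 0 ≤ I := intervalIntegral.integral_nonneg ht (fun u _ => hψ0 u)
  have hP : 0 ≤ p t := hp0 t
  set sP : ℝ := Real.sqrt (p t + 1 / 4) with hsPdef
  have hsP2 : sP ^ 2 = p t + 1 / 4 := Real.sq_sqrt (by linarith)
  have h14 : Real.sqrt ((1:ℝ) / 4) = 1 / 2 := by
    rw [show (1 / 4 : ℝ) = (1 / 2) ^ 2 by norm_num, Real.sqrt_sq (by norm_num)]
  have hsPhalf : (1:ℝ) / 2 ≤ sP := by
    rw [← h14]; exact Real.sqrt_le_sqrt (by linarith)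
  set Q : ℝ := p t + 1 / 2 - sP with hQdef
  have hQsq : Q = (sP - 1 / 2) ^ 2 := by rw [hQdef]; linear_combination -hsP2
  have hQ0 : 0 ≤ Q := hQsq ▸ sq_nonneg _
  have hsQ : Real.sqrt Q = sP - 1 / 2 := by
    rw [hQsq, Real.sqrt_sq (by linarith)]
  have hGQ : Q + Real.sqrt Q = p t := by rw [hsQ, hQdef]; ring
  set R : ℝ := C' * I + C' * Q with hRdef
  have hR0 : 0 ≤ R := by positivity
  have hsplit : Real.sqrt R = Real.sqrt C' * Real.sqrt (I + Q) := by
    rw [show R = C' * (I + Q) by rw [hRdef]; ring, Real.sqrt_mul hC'pos.le]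
  have sIQ : 0 ≤ Real.sqrt (I + Q) := Real.sqrt_nonneg _
  have h2C : 2 * C ≤ Real.sqrt C' := by
    have h4 : Real.sqrt (4 * C ^ 2) ≤ Real.sqrt C' := Real.sqrt_le_sqrt hC'2
    rwa [show (4 * C ^ 2 : ℝ) = (2 * C) ^ 2 by ring, Real.sqrt_sq (by linarith)] at h4
  have hsum : Real.sqrt I + Real.sqrt Q ≤ 2 * Real.sqrt (I + Q) := by
    have h1 := Real.sqrt_le_sqrt (show I ≤ I + Q by linarith)
    have h2 := Real.sqrt_le_sqrt (show Q ≤ I + Q by linarith)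
    linarith
  -- ψ t ≤ R + √R
  have hAR : ψ t ≤ R + Real.sqrt R := by
    have hh := h t ht
    rw [← hIdef, ← hGQ] at hh
    have e1 : C * (Real.sqrt I + Real.sqrt Q) ≤ C * (2 * Real.sqrt (I + Q)) :=
      mul_le_mul_of_nonneg_left hsum hC.le
    have e2 : (2 * C) * Real.sqrt (I + Q) ≤ Real.sqrt C' * Real.sqrt (I + Q) :=
      mul_le_mul_of_nonneg_right h2C sIQ
    have e3 : C * I ≤ C' * I := mul_le_mul_of_nonneg_right (by linarith) hI
    have e4 : C * Q ≤ C' * Q := mul_le_mul_of_nonneg_right (by linarith) hQ0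
    rw [hRdef, hsplit]
    linarith [hh, e1, e2, e3, e4]
  -- now conclude
  have hA0 : 0 ≤ ψ t := hψ0 t
  set sA : ℝ := Real.sqrt (ψ t + 1 / 4) with hsAdef
  have hsA2 : sA ^ 2 = ψ t + 1 / 4 := Real.sq_sqrt (by linarith)
  have hsA0 : 0 ≤ sA := Real.sqrt_nonneg _
  have hsAhalf : (1:ℝ) / 2 ≤ sA := by
    rw [hsAdef, ← h14]; exact Real.sqrt_le_sqrt (by linarith)
  have hsR2 : Real.sqrt R ^ 2 = R := Real.sq_sqrt hR0
  have hsR0 : 0 ≤ Real.sqrt R := Real.sqrt_nonneg _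
  show ψ t + 1 / 2 - sA ≤ R
  clear_value C' I sP Q R sA
  rcases le_or_gt (ψ t) R with hc | hc
  · linarith
  · have hb : 0 ≤ ψ t - R := by linarith
    have ha : ψ t - R ≤ Real.sqrt R := by linarith
    have h1 : (ψ t - R) ^ 2 ≤ R := by
      calc (ψ t - R) ^ 2 = (ψ t - R) * (ψ t - R) := by ring
        _ ≤ Real.sqrt R * Real.sqrt R := mul_self_le_mul_self hb ha
        _ = R := Real.mul_self_sqrt hR0
    have hsq : (ψ t + 1 / 2 - R) ^ 2 ≤ ψ t + 1 / 4 := by nlinarith [h1]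
    have h2 : ψ t + 1 / 2 - R ≤ sA := by
      have h3 := Real.sqrt_le_sqrt hsq
      rwa [Real.sqrt_sq (by linarith), ← hsAdef] at h3
    linarith
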